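/- Let C ⊆ ℓ¹ be the set of sequences (x, y₁, y₂, …) with yᵢ ≥ 0 for all i and x ≥ Σᵢ yᵢ, and let B = {(1, y₁, y₂, …) ∈ C}. Then B is convex, and its extreme points are exactly e = (1,0,0,…) and eᵢ = (1,0,…,0,1,0,…) (with the 1 in position i+1), for i ≥ 1. -/

import Mathlib

/-- The base `B = {(1, y₁, y₂, …) : yᵢ ≥ 0, Σᵢ yᵢ ≤ 1}` of the cone
`C = {(x, y) : yᵢ ≥ 0, Σᵢ yᵢ ≤ x} ⊆ ℓ¹`. -/
def B16 : Set (ℝ × (ℕ → ℝ)) :=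
  {p | p.1 = 1 ∧ (∀ i, 0 ≤ p.2 i) ∧ ∀ s : Finset ℕ, ∑ i ∈ s, p.2 i ≤ p.1}

lemma coord_le_one {p : ℝ × (ℕ → ℝ)} (hp : p ∈ B16) (i : ℕ) : p.2 i ≤ 1 := by
  obtain ⟨h1, h2, h3⟩ := hp
  have := h3 {i}
  simpa [h1] using this

/-- `B16` is convex and its extreme points are exactly `e = (1, 0, 0, …)` and
`eᵢ = (1, 0, …, 0, 1, 0, …)`. -/
theorem stmt16 :
    Convex ℝ B16 ∧
    Set.extremePoints ℝ B16 =
      insert ((1 : ℝ), (0 : ℕ → ℝ))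
        {p : ℝ × (ℕ → ℝ) | ∃ i : ℕ, p = ((1 : ℝ), Pi.single i (1 : ℝ))} := by
  have hconv : Convex ℝ B16 := by
    rintro p ⟨hp1, hp2, hp3⟩ q ⟨hq1, hq2, hq3⟩ a b ha hb hab
    refine ⟨?_, ?_, ?_⟩
    · simp only [Prod.fst_add, Prod.smul_fst, smul_eq_mul, hp1, hq1]
      linarith
    · intro i
      have := hp2 i; have := hq2 i
      simp only [Prod.snd_add, Prod.smul_snd, Pi.add_apply, Pi.smul_apply, smul_eq_mul]
      nlinarith
    · intro s
      have h1 := hp3 s; have h2 := hq3 s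
      simp only [Prod.snd_add, Prod.smul_snd, Pi.add_apply, Pi.smul_apply, smul_eq_mul,
        Finset.sum_add_distrib, ← Finset.mul_sum, Prod.fst_add, Prod.smul_fst]
      rw [hp1] at h1 ⊢; rw [hq1] at h2 ⊢
      nlinarith
  refine ⟨hconv, ?_⟩
  ext p
  simp only [mem_extremePoints, Set.mem_insert_iff, Set.mem_setOf_eq]
  constructor
  · rintro ⟨⟨hp1, hp2, hp3⟩, hext⟩
    -- first, no coordinate is strictly between 0 and 1
    have key : ∀ i, p.2 i = 0 ∨ p.2 i = 1 := by
      intro i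
      by_contra h
      push_neg at h
      obtain ⟨h0, h1⟩ := h
      have hpos : 0 < p.2 i := lt_of_le_of_ne (hp2 i) (Ne.symm h0)
      have hlt : p.2 i < 1 := lt_of_le_of_ne (coord_le_one ⟨hp1, hp2, hp3⟩ i) h1
      set t := p.2 i with ht
      have ht1 : (0:ℝ) < 1 - t := by linarith
      -- q₁ = (1, eᵢ), q₂ = (1, (1-t)⁻¹ • update p.2 i 0)
      have hq1mem : ((1:ℝ), Pi.single i (1:ℝ)) ∈ B16 := by
        refine ⟨rfl, fun j => ?_, fun s => ?_⟩
        · by_cases hj : j = i <;> simp [Pi.single_apply, hj]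
        · by_cases hi : i ∈ s
          · rw [Finset.sum_eq_single_of_mem i hi]
            · simp
            · intro j _ hj; simp [Pi.single_apply, hj]
          · rw [Finset.sum_eq_zero]
            · norm_num
            · intro j hj
              have : j ≠ i := fun h => hi (h ▸ hj)
              simp [Pi.single_apply, this]
      have hsum_erase : ∀ s : Finset ℕ, ∑ j ∈ s, Function.update p.2 i 0 j ≤ 1 - t := by
        intro s
        have h1 : ∑ j ∈ s, Function.update p.2 i 0 j = ∑ j ∈ s.erase i, p.2 j := by
          rw [← Finset.sum_erase s (f := fun j => Function.update p.2 i 0 j) (Function.update_self i 0 p.2)]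
          apply Finset.sum_congr rfl
          intro j hj
          rw [Function.update_of_ne (Finset.ne_of_mem_erase hj)]
        have h2 : t + ∑ j ∈ s.erase i, p.2 j ≤ 1 := by
          have := hp3 (insert i (s.erase i))
          rw [Finset.sum_insert (Finset.notMem_erase i s), hp1] at this
          exact this
        linarith [h1, h2]
      have hq2mem : ((1:ℝ), (1 - t)⁻¹ • Function.update p.2 i 0) ∈ B16 := by
        refine ⟨rfl, fun j => ?_, fun s => ?_⟩
        · by_cases hj : j = i
          · subst hj; simp
          · simp only [Pi.smul_apply, smul_eq_mul, Function.update_of_ne hj]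
            exact mul_nonneg (by positivity) (hp2 j)
        · simp only [Pi.smul_apply, smul_eq_mul, ← Finset.mul_sum]
          rw [inv_mul_le_iff₀ ht1]
          simpa using hsum_erase s
      have hseg : p ∈ openSegment ℝ ((1:ℝ), Pi.single i (1:ℝ))
          ((1:ℝ), (1 - t)⁻¹ • Function.update p.2 i 0) := by
        refine ⟨t, 1 - t, hpos, ht1, by ring, ?_⟩
        ext
        · simp only [Prod.fst_add, Prod.smul_fst, smul_eq_mul, hp1]
          ring
        · rename_i j
          simp only [Prod.snd_add, Prod.smul_snd, Pi.add_apply, Pi.smul_apply, smul_eq_mul]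
          by_cases hj : j = i
          · subst hj
            simp [Pi.single_apply]
            exact ht
          · rw [Function.update_of_ne hj]
            simp only [Pi.single_apply, hj, if_false]
            field_simp
            simp
      have := (@hext _ hq1mem _ hq2mem hseg).1
      have : Pi.single i (1:ℝ) = p.2 := congrArg Prod.snd this
      have : (1:ℝ) = t := by
        have h := congrFun this i
        simpa using h
      linarith
    -- now either all coords are 0, or one is 1
    by_cases hz : ∀ i, p.2 i = 0
    · left
      ext
      · exact hp1
      · rename_i j; exact hz j
    · right
      push_neg at hz
      obtain ⟨i, hi⟩ := hz
      have hi1 : p.2 i = 1 := (key i).resolve_left hi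
      refine ⟨i, ?_⟩
      ext
      · exact hp1
      · rename_i j
        by_cases hj : j = i
        · subst hj; simp [hi1]
        · have hji : p.2 i + p.2 j ≤ 1 := by
            have := hp3 {i, j}
            rwa [Finset.sum_pair (fun h => hj h.symm), hp1] at this
          have : p.2 j ≤ 0 := by linarith [hi1]
          have hj0 : p.2 j = 0 := le_antisymm this (hp2 j)
          simp [Pi.single_apply, hj, hj0]
  · -- backward
    have hmem0 : ((1:ℝ), (0 : ℕ → ℝ)) ∈ B16 := by
      refine ⟨rfl, fun i => le_refl 0, fun s => ?_⟩
      simp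
    have hmemi : ∀ i : ℕ, ((1:ℝ), Pi.single i (1:ℝ)) ∈ B16 := by
      intro i
      refine ⟨rfl, fun j => ?_, fun s => ?_⟩
      · by_cases hj : j = i <;> simp [Pi.single_apply, hj]
      · by_cases hi : i ∈ s
        · rw [Finset.sum_eq_single_of_mem i hi]
          · simp
          · intro j _ hj; simp [Pi.single_apply, hj]
        · rw [Finset.sum_eq_zero]
          · norm_num
          · intro j hj
            have : j ≠ i := fun h => hi (h ▸ hj)
            simp [Pi.single_apply, this]
    rintro (rfl | ⟨i, rfl⟩)
    · refine ⟨hmem0, ?_⟩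
      rintro x₁ hx₁ x₂ hx₂ ⟨a, b, ha, hb, hab, hsum⟩
      have hcoord : ∀ j, x₁.2 j = 0 ∧ x₂.2 j = 0 := by
        intro j
        have h := congrFun (congrArg Prod.snd hsum) j
        simp only [Prod.snd_add, Prod.smul_snd, Pi.add_apply, Pi.smul_apply, smul_eq_mul,
          Pi.zero_apply] at h
        have h1 := hx₁.2.1 j
        have h2 := hx₂.2.1 j
        constructor <;> nlinarith
      constructor
      · ext
        · exact hx₁.1
        · rename_i j; exact (hcoord j).1
      · ext
        · exact hx₂.1
        · rename_i j; exact (hcoord j).2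
    · refine ⟨hmemi i, ?_⟩
      rintro x₁ hx₁ x₂ hx₂ ⟨a, b, ha, hb, hab, hsum⟩
      have hcoords : ∀ j, x₁.2 j = (Pi.single i (1:ℝ) : ℕ → ℝ) j ∧ x₂.2 j = (Pi.single i (1:ℝ) : ℕ → ℝ) j := by
        intro j
        have h := congrFun (congrArg Prod.snd hsum) j
        simp only [Prod.snd_add, Prod.smul_snd, Pi.add_apply, Pi.smul_apply, smul_eq_mul] at h
        have h1 := hx₁.2.1 j
        have h2 := hx₂.2.1 j
        by_cases hj : j = i
        · subst hj
          have hle1 : x₁.2 j ≤ 1 := coord_le_one hx₁ j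
          have hle2 : x₂.2 j ≤ 1 := coord_le_one hx₂ j
          rw [Pi.single_eq_same] at h ⊢
          constructor <;> nlinarith
        · simp only [Pi.single_apply, hj, if_false] at h ⊢
          constructor <;> nlinarith
      constructor
      · ext
        · exact hx₁.1
        · rename_i j; exact (hcoords j).1
      · ext
        · exact hx₂.1
        · rename_i j; exact (hcoords j).2
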